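/- Let M ∈ Mat_n(K) be such that every invariant factor of M is a polynomial in t(t−1), i.e., M is similar to a direct sum of companion matrices C(P_i(t(t−1))) for monic polynomials P_i. Then M is the sum of an idempotent matrix and a square-zero matrix. -/

import Mathlib

open Polynomial

/-- The companion matrix of a monic polynomial `P = t^n - a_{n-1} t^{n-1} - ⋯ - a_1 t - a_0`. -/
def companion {K : Type*} [Field K] (n : ℕ) (P : Polynomial K) :
    Matrix (Fin n) (Fin n) K := fun i j =>
  if (j : ℕ) = n - 1 then -(P.coeff i) else if (i : ℕ) = (j : ℕ) + 1 then 1 else 0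

section Aux

open Matrix

variable {K : Type*} [Field K]

private lemma companion_apply_eq {n : ℕ} (Q : Polynomial K) (a b : Fin n) :
    companion n Q a b =
      (if (b : ℕ) = n - 1 then -(Q.coeff a) else 0) +
      (if ((a : ℕ) = (b : ℕ) + 1 ∧ (b : ℕ) ≠ n - 1) then 1 else 0) := by
  by_cases h1 : (b : ℕ) = n - 1
  · simp [companion, h1]
  · by_cases h2 : (a : ℕ) = (b : ℕ) + 1 <;> simp [companion, h1, h2]

private lemma companion_mulVec {n : ℕ} (hn : 0 < n) (Q r : Polynomial K) :
    companion n Q *ᵥ (fun b : Fin n => r.coeff b) =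
      fun a : Fin n => (X * r - C (r.coeff (n - 1)) * Q).coeff a := by
  funext a
  have hsum : (companion n Q *ᵥ (fun b : Fin n => r.coeff b)) a
      = ∑ b : Fin n, companion n Q a b * r.coeff b := rfl
  rw [hsum]
  simp only [companion_apply_eq, add_mul]
  rw [Finset.sum_add_distrib]
  have h1 : ∑ b : Fin n, (if (b : ℕ) = n - 1 then -(Q.coeff a) else 0) * r.coeff b
      = -(Q.coeff a) * r.coeff (n - 1) := by
    rw [Finset.sum_eq_single (⟨n - 1, by omega⟩ : Fin n)]
    · simp
    · intro b _ hb
      rw [if_neg, zero_mul]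
      simpa [Fin.ext_iff] using hb
    · intro hmem; exact absurd (Finset.mem_univ _) hmem
  have h2 : ∑ b : Fin n, (if ((a : ℕ) = (b : ℕ) + 1 ∧ (b : ℕ) ≠ n - 1) then (1 : K) else 0)
      * r.coeff b = (X * r).coeff a := by
    rcases Nat.eq_zero_or_pos (a : ℕ) with ha | ha
    · rw [ha]
      rw [Finset.sum_eq_zero]
      · simp [coeff_zero_eq_eval_zero]
      · intro b _
        rw [if_neg, zero_mul]
        rintro ⟨hc, -⟩
        omega
    · obtain ⟨a', ha'⟩ : ∃ a', (a : ℕ) = a' + 1 := ⟨(a : ℕ) - 1, by omega⟩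
      have halt : (a : ℕ) < n := a.isLt
      rw [ha', coeff_X_mul]
      rw [Finset.sum_eq_single (⟨a', by omega⟩ : Fin n)]
      · rw [if_pos ⟨rfl, by show a' ≠ n - 1; omega⟩, one_mul]
      · intro b _ hb
        rw [if_neg, zero_mul]
        rintro ⟨hc, -⟩
        exact hb (Fin.ext (show (b : ℕ) = a' by omega))
      · intro hmem; exact absurd (Finset.mem_univ _) hmem
  rw [h1, h2, coeff_sub, coeff_C_mul]
  ring

private noncomputable def qp (d : ℕ) : Fin d ⊕ Fin d → Polynomial K
  | .inl k => (X * (X - 1)) ^ (k : ℕ)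
  | .inr k => X * (X * (X - 1)) ^ (k : ℕ)

private lemma w_monic : (X * (X - 1) : K[X]).Monic := by
  simpa using monic_X.mul (monic_X_sub_C (1 : K))

private lemma w_natDegree : (X * (X - 1) : K[X]).natDegree = 2 := by
  have h : (X - 1 : K[X]) = X - C 1 := by simp
  rw [Monic.natDegree_mul monic_X (by rw [h]; exact monic_X_sub_C 1), natDegree_X, h,
    natDegree_X_sub_C]

private lemma qp_monic (d : ℕ) (j : Fin d ⊕ Fin d) : (qp (K := K) d j).Monic := by
  cases j with
  | inl k => exact (w_monic (K := K)).pow _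
  | inr k => exact monic_X.mul ((w_monic (K := K)).pow _)

private lemma qp_natDegree (d : ℕ) (j : Fin d ⊕ Fin d) :
    (qp (K := K) d j).natDegree = Sum.elim (fun k : Fin d => 2 * (k : ℕ))
      (fun k : Fin d => 2 * (k : ℕ) + 1) j := by
  cases j with
  | inl k =>
    show ((X * (X - 1) : K[X]) ^ (k : ℕ)).natDegree = 2 * (k : ℕ)
    rw [natDegree_pow, w_natDegree]; ring
  | inr k =>
    show (X * (X * (X - 1) : K[X]) ^ (k : ℕ)).natDegree = 2 * (k : ℕ) + 1
    rw [Monic.natDegree_mul monic_X ((w_monic (K := K)).pow _), natDegree_X, natDegree_pow,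
      w_natDegree]
    ring

private lemma comp_expand (P : Polynomial K) (hP : P.Monic) :
    P.comp (X * (X - 1)) = (X * (X - 1)) ^ P.natDegree +
      ∑ i ∈ Finset.range P.natDegree, C (P.coeff i) * (X * (X - 1)) ^ i := by
  conv_lhs => rw [hP.as_sum]
  simp [add_comp, X_pow_comp, sum_comp, mul_comp, C_comp]

private lemma main_similar (P : Polynomial K) (hP : P.Monic) (d' : ℕ)
    (hd : P.natDegree = d' + 1) :
    companion (2 * (d' + 1)) (P.comp (X * (X - 1))) *
      (Matrix.of fun (a : Fin (2 * (d' + 1))) (j : Fin (d' + 1) ⊕ Fin (d' + 1)) =>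
        (qp (K := K) (d' + 1) j).coeff a) =
    (Matrix.of fun (a : Fin (2 * (d' + 1))) (j : Fin (d' + 1) ⊕ Fin (d' + 1)) =>
        (qp (K := K) (d' + 1) j).coeff a) *
      Matrix.fromBlocks 0 (companion (d' + 1) P) 1 1 := by
  set d := d' + 1 with hdd
  set w : K[X] := X * (X - 1) with hw
  set Q : K[X] := P.comp w with hQ
  apply Matrix.ext; intro a j
  simp only [Matrix.mul_apply]; erw [Matrix.mul_apply]
  have L := congrFun (companion_mulVec (n := 2 * d) (by omega) Q (qp (K := K) d j)) a
  simp only [Matrix.mulVec, dotProduct] at L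
  simp only [Matrix.of_apply]
  rw [L]
  rw [Fintype.sum_sum_type]
  cases j with
  | inl k =>
    have hlead : (qp (K := K) d (Sum.inl k)).coeff (2 * d - 1) = 0 := by
      apply coeff_eq_zero_of_natDegree_lt
      rw [qp_natDegree]
      have := k.isLt
      simp only [Sum.elim_inl]
      omega
    rw [hlead, Polynomial.C_0, zero_mul, sub_zero]
    simp only [Matrix.fromBlocks_apply₁₁, Matrix.fromBlocks_apply₂₁, Matrix.zero_apply,
      mul_zero, Finset.sum_const_zero, zero_add, Matrix.one_apply, mul_ite, mul_one]
    rw [Finset.sum_ite_eq' Finset.univ k (fun i => (qp (K := K) d (Sum.inr i)).coeff a)]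
    simp only [Finset.mem_univ, if_true]
    rfl
  | inr k =>
    simp only [Matrix.fromBlocks_apply₁₂, Matrix.fromBlocks_apply₂₂, Matrix.one_apply]
    have hsum2 : ∑ i : Fin d, (qp (K := K) d (Sum.inr i)).coeff a *
        (if i = k then (1 : K) else 0) = (qp (K := K) d (Sum.inr k)).coeff a := by
      simp only [mul_ite, mul_one, mul_zero]
      rw [Finset.sum_ite_eq' Finset.univ k (fun i => (qp (K := K) d (Sum.inr i)).coeff a)]
      simp
    rw [hsum2]
    by_cases hk : (k : ℕ) = d - 1
    · -- top column
      have hklt := k.isLt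
      have hkd : (k : ℕ) = d' := by omega
      have hlead : (qp (K := K) d (Sum.inr k)).coeff (2 * d - 1) = 1 := by
        have hdeg : (qp (K := K) d (Sum.inr k)).natDegree = 2 * d - 1 := by
          rw [qp_natDegree]; simp only [Sum.elim_inr]; omega
        rw [← hdeg]
        exact (qp_monic d (Sum.inr k)).coeff_natDegree
      rw [hlead, Polynomial.C_1, one_mul]
      have hcomp : ∀ i : Fin d, companion d P i k = -(P.coeff i) := by
        intro i; simp [companion, hk]
      rw [Finset.sum_congr rfl (fun i _ => by rw [hcomp i])]
      have hpolysum : ∑ i : Fin d, (qp (K := K) d (Sum.inl i)).coeff a * -(P.coeff i)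
          = (∑ i ∈ Finset.range d, C (-(P.coeff i)) * w ^ i).coeff a := by
        rw [finset_sum_coeff]
        rw [← Fin.sum_univ_eq_sum_range (fun i => (C (-(P.coeff i)) * w ^ i).coeff a) d]
        apply Finset.sum_congr rfl
        intro i _
        rw [coeff_C_mul]
        show (w ^ (i : ℕ)).coeff a * -(P.coeff i) = _
        ring
      rw [hpolysum, ← coeff_add]
      congr 1
      have hQexp : Q = w ^ d + ∑ i ∈ Finset.range d, C (P.coeff i) * w ^ i := by
        rw [hQ, comp_expand P hP, hd]
      rw [hQexp]
      have hqpk : qp (K := K) d (Sum.inr k) = X * w ^ d' := by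
        show X * w ^ (k : ℕ) = X * w ^ d'
        rw [hkd]
      rw [hqpk]
      have hsplit : ∑ i ∈ Finset.range d, C (-(P.coeff i)) * w ^ i
          = -∑ i ∈ Finset.range d, C (P.coeff i) * w ^ i := by
        rw [← Finset.sum_neg_distrib]
        apply Finset.sum_congr rfl
        intro i _
        rw [map_neg]; ring
      rw [hsplit]
      have hpow : w ^ d = w ^ d' * w := by rw [hdd, pow_succ]
      rw [hpow, hw]
      ring
    · -- lower columns
      have hklt := k.isLt
      have hlead : (qp (K := K) d (Sum.inr k)).coeff (2 * d - 1) = 0 := by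
        apply coeff_eq_zero_of_natDegree_lt
        rw [qp_natDegree]
        simp only [Sum.elim_inr]
        omega
      rw [hlead, Polynomial.C_0, zero_mul, sub_zero]
      have hk' : ¬(k : ℕ) = d' := by omega
      have hcomp : ∀ i : Fin d, companion d P i k
          = if (i : ℕ) = (k : ℕ) + 1 then (1 : K) else 0 := by
        intro i; simp [companion, hk, hk']
      rw [Finset.sum_congr rfl (fun i _ => by rw [hcomp i])]
      have hsum1 : ∑ i : Fin d, (qp (K := K) d (Sum.inl i)).coeff a *
          (if (i : ℕ) = (k : ℕ) + 1 then (1 : K) else 0)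
          = (qp (K := K) d (Sum.inl ⟨(k : ℕ) + 1, by omega⟩)).coeff a := by
        rw [Finset.sum_eq_single (⟨(k : ℕ) + 1, by omega⟩ : Fin d)]
        · simp
        · intro b _ hb
          rw [if_neg, mul_zero]
          intro hc
          exact hb (Fin.ext hc)
        · intro hmem; exact absurd (Finset.mem_univ _) hmem
      rw [hsum1, ← coeff_add]
      congr 1
      show X * (X * w ^ (k : ℕ)) = w ^ ((k : ℕ) + 1) + X * w ^ (k : ℕ)
      rw [pow_succ, hw]
      ring

private def pe (d : ℕ) : (Fin d ⊕ Fin d) ≃ Fin (2 * d) where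
  toFun := Sum.elim (fun k => ⟨2 * (k : ℕ), by have := k.isLt; omega⟩)
    (fun k => ⟨2 * (k : ℕ) + 1, by have := k.isLt; omega⟩)
  invFun a := if (a : ℕ) % 2 = 0 then Sum.inl ⟨(a : ℕ) / 2, by have := a.isLt; omega⟩
    else Sum.inr ⟨(a : ℕ) / 2, by have := a.isLt; omega⟩
  left_inv := by
    rintro (k | k) <;>
      dsimp only [Sum.elim_inl, Sum.elim_inr] <;>
      [rw [if_pos (by omega)]; rw [if_neg (by omega)]] <;>
      simp [Fin.ext_iff] <;> omega
  right_inv := by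
    intro a
    by_cases h : (a : ℕ) % 2 = 0 <;>
      simp only [h, if_pos, if_neg, ite_true, ite_false, Sum.elim_inl, Sum.elim_inr] <;>
      simp [Fin.ext_iff] <;> omega

private theorem companion_decomp (P : Polynomial K) (hP : P.Monic) (m : ℕ)
    (hm : m = (P.comp (X * (X - 1))).natDegree) :
    ∃ A B : Matrix (Fin m) (Fin m) K,
      A ^ 2 = A ∧ B ^ 2 = 0 ∧ companion m (P.comp (X * (X - 1))) = A + B := by
  have hm2 : m = 2 * P.natDegree := by
    rw [hm, natDegree_comp, w_natDegree]; ring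
  rcases Nat.eq_zero_or_pos P.natDegree with h0 | hpos
  · have hm0 : m = 0 := by omega
    subst hm0
    exact ⟨0, 0, by simp, by simp, by ext i j; exact i.elim0⟩
  · obtain ⟨d', hd⟩ : ∃ d', P.natDegree = d' + 1 := ⟨P.natDegree - 1, by omega⟩
    set d := d' + 1 with hdd
    have hmd : m = 2 * d := by omega
    subst hmd
    set Q : K[X] := P.comp (X * (X - 1)) with hQ
    set S : Matrix (Fin (2 * d)) (Fin d ⊕ Fin d) K :=
      Matrix.of fun a j => (qp (K := K) d j).coeff a with hS
    set e2 := pe d with he2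
    set T : Matrix (Fin (2 * d)) (Fin (2 * d)) K := S.submatrix id ⇑e2.symm with hT
    -- T is upper triangular with 1s on the diagonal
    have hdeg : ∀ b : Fin (2 * d), (qp (K := K) d (e2.symm b)).natDegree = (b : ℕ) := by
      intro b
      rw [qp_natDegree]
      have : e2 (e2.symm b) = b := e2.apply_symm_apply b
      rcases h : e2.symm b with k | k <;> rw [h] at this <;>
        simpa [he2, pe, Fin.ext_iff] using congrArg (fun x : Fin (2 * d) => (x : ℕ)) this
    have htri : T.BlockTriangular id := by
      intro a b hab
      show (qp (K := K) d (e2.symm b)).coeff a = 0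
      apply coeff_eq_zero_of_natDegree_lt
      rw [hdeg b]
      exact_mod_cast hab
    have hdiag : ∀ b, T b b = 1 := by
      intro b
      show (qp (K := K) d (e2.symm b)).coeff b = 1
      conv_lhs => rw [show ((b : Fin (2*d)) : ℕ) = (qp (K := K) d (e2.symm b)).natDegree from (hdeg b).symm]
      exact (qp_monic d (e2.symm b)).coeff_natDegree
    have hdet : T.det = 1 := by
      rw [Matrix.det_of_upperTriangular htri]
      simp [hdiag]
    have hTd : IsUnit T.det := hdet ▸ isUnit_one
    have hui : T⁻¹ * T = 1 := Matrix.nonsing_inv_mul T hTd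
    have hiu : T * T⁻¹ = 1 := Matrix.mul_nonsing_inv T hTd
    -- the similarity
    have hCS : companion (2 * d) Q * S = S * Matrix.fromBlocks 0 (companion d P) 1 1 :=
      main_similar P hP d' hd
    have h1 : companion (2 * d) Q * T = (companion (2 * d) Q * S).submatrix id ⇑e2.symm := by
      ext a b
      simp [Matrix.mul_apply, hT]
    have h2 : T * (Matrix.fromBlocks 0 (companion d P) 1 1).submatrix ⇑e2.symm ⇑e2.symm
        = (S * Matrix.fromBlocks 0 (companion d P) 1 1).submatrix id ⇑e2.symm :=
      Matrix.submatrix_mul_equiv S _ id e2.symm ⇑e2.symm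
    have hCT : companion (2 * d) Q * T
        = T * (Matrix.fromBlocks 0 (companion d P) 1 1).submatrix ⇑e2.symm ⇑e2.symm := by
      rw [h1, h2, hCS]; rfl
    set A'' : Matrix (Fin (2 * d)) (Fin (2 * d)) K :=
      (Matrix.fromBlocks 0 0 1 1).submatrix ⇑e2.symm ⇑e2.symm with hA''
    set B'' : Matrix (Fin (2 * d)) (Fin (2 * d)) K :=
      (Matrix.fromBlocks 0 (companion d P) 0 0).submatrix ⇑e2.symm ⇑e2.symm with hB''
    have hsum : A'' + B''
        = (Matrix.fromBlocks 0 (companion d P) 1 1).submatrix ⇑e2.symm ⇑e2.symm := by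
      have hfb : (Matrix.fromBlocks 0 0 1 1 : Matrix (Fin d ⊕ Fin d) (Fin d ⊕ Fin d) K) +
          Matrix.fromBlocks 0 (companion d P) 0 0
          = Matrix.fromBlocks 0 (companion d P) 1 1 := by
        rw [Matrix.fromBlocks_add]
        congr 1 <;> simp
      rw [hA'', hB'', ← hfb]
      ext a b
      simp [Matrix.submatrix_apply, Matrix.add_apply]
    have hA2 : A'' * A'' = A'' := by
      rw [hA'', Matrix.submatrix_mul_equiv]
      congr 1
      rw [Matrix.fromBlocks_multiply]
      congr 1 <;> simp
    have hB2 : B'' * B'' = 0 := by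
      rw [hB'', Matrix.submatrix_mul_equiv]
      rw [Matrix.fromBlocks_multiply]
      simp
    refine ⟨T * A'' * T⁻¹, T * B'' * T⁻¹, ?_, ?_, ?_⟩
    · rw [pow_two]
      calc (T * A'' * T⁻¹) * (T * A'' * T⁻¹)
          = T * (A'' * ((T⁻¹ * T) * (A'' * T⁻¹))) := by
            simp only [mul_assoc]
        _ = T * A'' * T⁻¹ := by
            rw [hui, one_mul, ← mul_assoc A'', hA2, mul_assoc]
    · rw [pow_two]
      calc (T * B'' * T⁻¹) * (T * B'' * T⁻¹)
          = T * (B'' * ((T⁻¹ * T) * (B'' * T⁻¹))) := by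
            simp only [mul_assoc]
        _ = 0 := by
            rw [hui, one_mul, ← mul_assoc B'', hB2]
            simp
    · have h3 : companion (2 * d) Q * T = T * (A'' + B'') := by
        rw [hsum]; exact hCT
      have h4 : companion (2 * d) Q * T * T⁻¹ = T * (A'' + B'') * T⁻¹ := by rw [h3]
      rw [mul_assoc, hiu, mul_one] at h4
      rw [h4, Matrix.mul_add, Matrix.add_mul]
    
end Aux

theorem stmt_7 {K : Type*} [Field K] {n : ℕ} (M : Matrix (Fin n) (Fin n) K)
    (h : ∃ (k : ℕ) (P : Fin k → Polynomial K), (∀ i, (P i).Monic) ∧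
      ∃ (e : Fin n ≃ (Σ i : Fin k, Fin (((P i).comp (X * (X - 1))).natDegree)))
        (R : Matrix (Fin n) (Fin n) K), IsUnit R ∧
        M = R * (Matrix.reindex e.symm e.symm (Matrix.blockDiagonal'
          (fun i => companion (((P i).comp (X * (X - 1))).natDegree)
            ((P i).comp (X * (X - 1)))))) * R⁻¹) :
    ∃ A B : Matrix (Fin n) (Fin n) K, A ^ 2 = A ∧ B ^ 2 = 0 ∧ M = A + B := by
  obtain ⟨k, P, hmon, e, R, hR, hM⟩ := h
  choose A B hA hB hAB using fun i =>
    companion_decomp (P i) (hmon i) (((P i).comp (X * (X - 1))).natDegree) rfl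
  have hinv : R⁻¹ * R = 1 :=
    Matrix.nonsing_inv_mul R ((Matrix.isUnit_iff_isUnit_det R).mp hR)
  set E := Matrix.reindexAlgEquiv K K e.symm with hE
  set bdA := Matrix.blockDiagonal' A with hbdA
  set bdB := Matrix.blockDiagonal' B with hbdB
  have hbdmul : ∀ (X Y : ∀ i, Matrix (Fin (((P i).comp (Polynomial.X * (Polynomial.X - 1))).natDegree)) (Fin (((P i).comp (Polynomial.X * (Polynomial.X - 1))).natDegree)) K),
      Matrix.blockDiagonal' X * Matrix.blockDiagonal' Y
        = Matrix.blockDiagonal' (fun i => X i * Y i) :=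
    fun X Y => (Matrix.blockDiagonal'_mul X Y).symm
  have hA2 : bdA * bdA = bdA := by
    have h' : (fun i => A i * A i) = A := funext fun i => by
      have := hA i; rwa [pow_two] at this
    rw [hbdA, hbdmul, h']
  have hB2 : bdB * bdB = 0 := by
    rw [hbdB, hbdmul]
    rw [show (fun i => B i * B i) = (fun _ => 0 : ∀ i, Matrix _ _ K) from
      funext fun i => by have := hB i; rw [pow_two] at this; rw [this]]
    exact Matrix.blockDiagonal'_zero
  have hsplit : Matrix.blockDiagonal'
      (fun i => companion (((P i).comp (Polynomial.X * (Polynomial.X - 1))).natDegree)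
        ((P i).comp (Polynomial.X * (Polynomial.X - 1)))) = bdA + bdB := by
    have h' : (fun i => companion (((P i).comp (Polynomial.X * (Polynomial.X - 1))).natDegree)
        ((P i).comp (Polynomial.X * (Polynomial.X - 1)))) = A + B := by
      funext i; exact hAB i
    rw [h', Matrix.blockDiagonal'_add, hbdA, hbdB]
  have hre : ∀ (X : Matrix (Σ i : Fin k, Fin (((P i).comp (Polynomial.X * (Polynomial.X - 1))).natDegree)) (Σ i : Fin k, Fin (((P i).comp (Polynomial.X * (Polynomial.X - 1))).natDegree)) K),
      Matrix.reindex e.symm e.symm X = E X := fun X => rfl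
  refine ⟨R * E bdA * R⁻¹, R * E bdB * R⁻¹, ?_, ?_, ?_⟩
  · rw [pow_two]
    calc (R * E bdA * R⁻¹) * (R * E bdA * R⁻¹)
        = R * (E bdA * ((R⁻¹ * R) * (E bdA * R⁻¹))) := by simp only [mul_assoc]
      _ = R * E bdA * R⁻¹ := by
          rw [hinv, one_mul, ← mul_assoc (E bdA), ← map_mul, hA2, mul_assoc]
  · rw [pow_two]
    calc (R * E bdB * R⁻¹) * (R * E bdB * R⁻¹)
        = R * (E bdB * ((R⁻¹ * R) * (E bdB * R⁻¹))) := by simp only [mul_assoc]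
      _ = 0 := by
          rw [hinv, one_mul, ← mul_assoc (E bdB), ← map_mul, hB2, map_zero, zero_mul,
            mul_zero]
  · rw [hM, hre, hsplit, map_add, Matrix.mul_add, Matrix.add_mul]
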